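/- Let G be a connected graph with n vertices and n+k-2 edges, and let t be a positive integer. Define c = 1/(t+2) for t ∈ {1,2} and c = 1/(4t-5) for t ≥ 3. If 1 ≤ k ≤ c·n² and n ≥ 3·binom(1/c, 2), then r(G, tK_2) = n + t - 1. -/

import Mathlib

open SimpleGraph Finset

/-- The graph `C` contains a copy of `G` (as a subgraph, via an injective map). -/
def ContainsCopy {V W : Type*} (C : SimpleGraph V) (G : SimpleGraph W) : Prop :=
  ∃ f : W ↪ V, ∀ u v : W, G.Adj u v → C.Adj (f u) (f v)

/-- `N` has the Ramsey property for `(G, H)`: every red-blue coloring of the edges of `K_N`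
(given by the red graph `C`) contains a red copy of `G` or a blue copy of `H`. -/
def IsRamsey {α β : Type*} (G : SimpleGraph α) (H : SimpleGraph β) (N : ℕ) : Prop :=
  ∀ C : SimpleGraph (Fin N), ContainsCopy C G ∨ ContainsCopy Cᶜ H

/-- The Ramsey number `r(G, H)`. -/
noncomputable def ramsey {α β : Type*} (G : SimpleGraph α) (H : SimpleGraph β) : ℕ :=
  sInf {N | IsRamsey G H N}

/-- The disjoint union of `t` copies of `H`. -/
def tCopies (t : ℕ) {β : Type*} (H : SimpleGraph β) : SimpleGraph (Fin t × β) where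
  Adj a b := a.1 = b.1 ∧ H.Adj a.2 b.2
  symm := ⟨fun _ _ h => ⟨h.1.symm, h.2.symm⟩⟩
  loopless := ⟨fun a h => H.loopless.irrefl a.2 h.2⟩

lemma turan_bound {W : Type*} [Fintype W] [DecidableEq W] (G : SimpleGraph W) [DecidableRel G.Adj] :
    ∀ s : ℕ, 1 ≤ s → ∀ A : Finset W,
      (∀ I : Finset W, I ⊆ A → (∀ a ∈ I, ∀ b ∈ I, ¬ G.Adj a b) → I.card ≤ s) →
      (A.card : ℚ)^2 ≤ s * ((∑ v ∈ A, ((G.neighborFinset v ∩ A).card : ℚ)) + A.card) := by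
  intro s
  induction s with
  | zero => intro h; omega
  | succ s ih =>
    intro _ A hA
    rcases A.eq_empty_or_nonempty with rfl | hAne
    · simp
    rcases Nat.eq_zero_or_pos s with hs | hs
    · -- s = 0 : every two vertices in A are adjacent
      subst hs
      have hadj : ∀ u ∈ A, ∀ a ∈ A, a ≠ u → G.Adj u a := by
        intro u hu a ha hne
        by_contra hna
        have hcard := hA {u, a} (by
          intro z hz
          simp only [Finset.mem_insert, Finset.mem_singleton] at hz
          rcases hz with rfl | rfl
          · exact hu
          · exact ha) (by
          intro x hx y hy
          simp only [Finset.mem_insert, Finset.mem_singleton] at hx hy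
          rcases hx with rfl | rfl <;> rcases hy with rfl | rfl
          · exact G.loopless.irrefl _
          · exact hna
          · exact fun h => hna h.symm
          · exact G.loopless.irrefl _)
        rw [Finset.card_insert_of_notMem (by simp [hne.symm]), Finset.card_singleton] at hcard
        omega
      have hterm : ∀ u ∈ A, (A.card : ℚ) - 1 ≤ ((G.neighborFinset u ∩ A).card : ℚ) := by
        intro u hu
        have hsub : A.erase u ⊆ G.neighborFinset u ∩ A := by
          intro a ha
          have h1 := Finset.mem_erase.1 ha
          exact Finset.mem_inter.2 ⟨(G.mem_neighborFinset u a).2 (hadj u hu a h1.2 h1.1), h1.2⟩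
        have h2 := Finset.card_le_card hsub
        rw [Finset.card_erase_of_mem hu] at h2
        have h3 : (1:ℕ) ≤ A.card := Finset.card_pos.2 ⟨u, hu⟩
        have h4 := (Nat.cast_le (α := ℚ)).2 h2
        rw [Nat.cast_sub h3] at h4
        simpa using h4
      have hsum : (A.card : ℚ) * ((A.card : ℚ) - 1) ≤ ∑ v ∈ A, ((G.neighborFinset v ∩ A).card : ℚ) := by
        have := Finset.card_nsmul_le_sum A (fun v => ((G.neighborFinset v ∩ A).card : ℚ)) ((A.card : ℚ) - 1) hterm
        simpa [nsmul_eq_mul] using this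
      push_cast
      nlinarith [hsum]
    · -- inductive step
      obtain ⟨v, hv, hmin⟩ := A.exists_min_image (fun u => (G.neighborFinset u ∩ A).card) hAne
      set δ := (G.neighborFinset v ∩ A).card with hδ
      set B := insert v (G.neighborFinset v ∩ A) with hB
      have hvB : v ∉ G.neighborFinset v ∩ A := by
        simp [G.mem_neighborFinset]
      have hBA : B ⊆ A := Finset.insert_subset hv (Finset.inter_subset_right)
      have hBcard : B.card = δ + 1 := by
        rw [hB, Finset.card_insert_of_notMem hvB]
      set A' := A \ B with hA'
      have hA'sub : A' ⊆ A := Finset.sdiff_subset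
      have hle : δ + 1 ≤ A.card := hBcard ▸ Finset.card_le_card hBA
      have hA'card : A'.card = A.card - (δ + 1) := by
        rw [hA', Finset.card_sdiff_of_subset hBA, hBcard]
      have hcard_split : (A.card : ℚ) = A'.card + δ + 1 := by
        rw [hA'card, Nat.cast_sub hle]
        push_cast
        ring
      have hIH := ih hs A' (by
        intro I hI hind
        have hvI : v ∉ I := fun hvI => by
          have h5 := hI hvI
          rw [hA', Finset.mem_sdiff] at h5
          exact h5.2 (Finset.mem_insert_self _ _)
        have hins := hA (insert v I) (Finset.insert_subset hv (hI.trans hA'sub)) (by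
          intro a ha b hb
          simp only [Finset.mem_insert] at ha hb
          rcases ha with rfl | ha <;> rcases hb with rfl | hb
          · exact G.loopless.irrefl _
          · intro hadj
            have hbA' := hI hb
            rw [hA', Finset.mem_sdiff] at hbA'
            exact hbA'.2 (Finset.mem_insert_of_mem (Finset.mem_inter.2
              ⟨(G.mem_neighborFinset _ _).2 hadj, hbA'.1⟩))
          · intro hadj
            have haA' := hI ha
            rw [hA', Finset.mem_sdiff] at haA'
            exact haA'.2 (Finset.mem_insert_of_mem (Finset.mem_inter.2
              ⟨(G.mem_neighborFinset _ _).2 hadj.symm, haA'.1⟩))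
          · exact hind a ha b hb)
        rw [Finset.card_insert_of_notMem hvI] at hins
        omega)
      have hsum_split : ∑ u ∈ A, ((G.neighborFinset u ∩ A).card : ℚ)
          = (∑ u ∈ A', ((G.neighborFinset u ∩ A).card : ℚ)) + ∑ u ∈ B, ((G.neighborFinset u ∩ A).card : ℚ) :=
        (Finset.sum_sdiff hBA).symm
      have hBsum : ((δ : ℚ)) * ((δ:ℚ) + 1) ≤ ∑ u ∈ B, ((G.neighborFinset u ∩ A).card : ℚ) := by
        have h := Finset.card_nsmul_le_sum B (fun u => ((G.neighborFinset u ∩ A).card : ℚ)) (δ : ℚ) (by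
          intro u hu
          simpa using (Nat.cast_le (α := ℚ)).2 (hmin u (hBA hu)))
        rw [hBcard] at h
        push_cast [nsmul_eq_mul] at h
        nlinarith [h]
      have hA'sum : ∑ u ∈ A', ((G.neighborFinset u ∩ A').card : ℚ)
          ≤ ∑ u ∈ A', ((G.neighborFinset u ∩ A).card : ℚ) := by
        apply Finset.sum_le_sum
        intro u hu
        exact_mod_cast Finset.card_le_card (Finset.inter_subset_inter (Finset.Subset.refl _) hA'sub)
      have hmid : ∑ u ∈ A', ((G.neighborFinset u ∩ A').card : ℚ) + (δ:ℚ) * ((δ:ℚ)+1)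
          ≤ ∑ u ∈ A, ((G.neighborFinset u ∩ A).card : ℚ) := by
        rw [hsum_split]; exact add_le_add hA'sum hBsum
      have hs1 : (1:ℚ) ≤ s := by exact_mod_cast hs
      have hd0 : (0:ℚ) ≤ (δ:ℚ) := Nat.cast_nonneg _
      have ha0 : (0:ℚ) ≤ (A'.card:ℚ) := Nat.cast_nonneg _
      have hS0 : (0:ℚ) ≤ ∑ u ∈ A', ((G.neighborFinset u ∩ A').card : ℚ) :=
        Finset.sum_nonneg fun _ _ => Nat.cast_nonneg _
      rw [hcard_split]
      push_cast
      nlinarith [hIH, sq_nonneg ((A'.card:ℚ) - (s:ℚ)*((δ:ℚ)+1)), hmid,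
        mul_le_mul_of_nonneg_left hmid (by positivity : (0:ℚ) ≤ (s:ℚ)+1),
        mul_le_mul_of_nonneg_left hIH (by positivity : (0:ℚ) ≤ (s:ℚ)+1)]

def BM {N : ℕ} (D : SimpleGraph (Fin N)) (M : Finset (Fin N × Fin N)) : Prop :=
  (∀ p ∈ M, D.Adj p.1 p.2) ∧
    ∀ p ∈ M, ∀ q ∈ M, p ≠ q → p.1 ≠ q.1 ∧ p.1 ≠ q.2 ∧ p.2 ≠ q.1 ∧ p.2 ≠ q.2

lemma bm_subset {N : ℕ} {D : SimpleGraph (Fin N)} {M M' : Finset (Fin N × Fin N)}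
    (hsub : M' ⊆ M) (h : BM D M) : BM D M' :=
  ⟨fun p hp => h.1 p (hsub hp), fun p hp q hq hpq => h.2 p (hsub hp) q (hsub hq) hpq⟩

lemma bm_insert {N : ℕ} {D : SimpleGraph (Fin N)} {M : Finset (Fin N × Fin N)}
    (h : BM D M) {a b : Fin N} (hab : D.Adj a b)
    (ha : ∀ p ∈ M, a ≠ p.1 ∧ a ≠ p.2) (hb : ∀ p ∈ M, b ≠ p.1 ∧ b ≠ p.2) :
    BM D (insert (a, b) M) := by
  constructor
  · intro p hp
    rcases Finset.mem_insert.1 hp with rfl | hp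
    · exact hab
    · exact h.1 p hp
  · intro p hp q hq hpq
    rcases Finset.mem_insert.1 hp with rfl | hp <;> rcases Finset.mem_insert.1 hq with rfl | hq
    · exact absurd rfl hpq
    · exact ⟨(ha q hq).1, (ha q hq).2, (hb q hq).1, (hb q hq).2⟩
    · exact ⟨(ha p hp).1.symm, (hb p hp).1.symm, (ha p hp).2.symm, (hb p hp).2.symm⟩
    · exact h.2 p hp q hq hpq

lemma bm_to_copy {N t : ℕ} (D : SimpleGraph (Fin N)) (M : Finset (Fin N × Fin N))
    (h : BM D M) (hc : M.card = t) : ContainsCopy D (tCopies t (⊤ : SimpleGraph (Fin 2))) := by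
  have hcard : Fintype.card ↥M = t := by rw [Fintype.card_coe, hc]
  let e : Fin t ≃ ↥M := (Fintype.equivFinOfCardEq hcard).symm
  let f : Fin t × Fin 2 → Fin N := fun x => if x.2 = 0 then (e x.1).1.1 else (e x.1).1.2
  have hne : ∀ i : Fin t, (e i).1.1 ≠ (e i).1.2 := fun i => (h.1 _ (e i).2).ne
  have hdiff : ∀ i j : Fin t, i ≠ j →
      (e i).1.1 ≠ (e j).1.1 ∧ (e i).1.1 ≠ (e j).1.2 ∧ (e i).1.2 ≠ (e j).1.1 ∧ (e i).1.2 ≠ (e j).1.2 := by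
    intro i j hij
    have : (e i).1 ≠ (e j).1 := fun hh => hij (e.injective (Subtype.ext hh))
    exact h.2 _ (e i).2 _ (e j).2 this
  have hinj : Function.Injective f := by
    rintro ⟨i, a⟩ ⟨j, b⟩ hab
    by_cases hij : i = j
    · subst hij
      simp only [f] at hab
      fin_cases a <;> fin_cases b <;> simp_all
      all_goals first
        | exact absurd hab.symm (hne i)
        | exact absurd hab (hne i)
    · exfalso
      have h4 := hdiff i j hij
      simp only [f] at hab
      fin_cases a <;> fin_cases b <;> simp_all
  refine ⟨⟨f, hinj⟩, ?_⟩
  rintro ⟨i, a⟩ ⟨j, b⟩ hadj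
  obtain ⟨hij, hab⟩ : (i, a).1 = (j, b).1 ∧ (⊤ : SimpleGraph (Fin 2)).Adj (i, a).2 (j, b).2 := hadj
  simp only at hij
  subst hij
  have hab' : a ≠ b := hab.ne
  simp only [Function.Embedding.coeFn_mk, f]
  fin_cases a <;> fin_cases b <;> simp_all
  · exact h.1 _ (e i).2
  · exact (h.1 _ (e i).2).symm

lemma lower_no_ramsey {V : Type*} [Fintype V] [DecidableEq V] (G : SimpleGraph V)
    (n t N' : ℕ) (ht : 1 ≤ t) (hn : Fintype.card V = n) (hn3 : 2 ≤ n)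
    (hconn : G.Connected) (hN : N' ≤ n + t - 2) :
    ¬ IsRamsey G (tCopies t (⊤ : SimpleGraph (Fin 2))) N' := by
  intro hram
  set C : SimpleGraph (Fin N') :=
    { Adj := fun a b => a ≠ b ∧ a.val < n - 1 ∧ b.val < n - 1
      symm := ⟨by rintro a b ⟨h1, h2, h3⟩; exact ⟨h1.symm, h3, h2⟩⟩
      loopless := ⟨by rintro a ⟨h1, -⟩; exact h1 rfl⟩ } with hC
  rcases hram C with ⟨f, hf⟩ | ⟨f, hf⟩
  · -- red copy of G : impossible
    have hdeg : ∀ v : V, ∃ u, G.Adj v u := by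
      intro v
      obtain ⟨u, hu⟩ := Fintype.exists_ne_of_one_lt_card (by omega) v
      obtain ⟨w⟩ := (hconn.preconnected v u).some
      · exact absurd rfl hu
      · next h p => exact ⟨_, h⟩
    have hmaps : ∀ v : V, f v ∈ Finset.univ.filter (fun i : Fin N' => i.val < n - 1) := by
      intro v
      obtain ⟨u, hu⟩ := hdeg v
      have := hf v u hu
      rw [hC] at this
      exact Finset.mem_filter.2 ⟨Finset.mem_univ _, this.2.1⟩
    have h1 : n ≤ (Finset.univ.filter (fun i : Fin N' => i.val < n - 1)).card := by
      have := Finset.card_le_card_of_injOn (s := (Finset.univ : Finset V)) f (fun v _ => hmaps v) (f.injective.injOn)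
      rwa [Finset.card_univ, hn] at this
    have h2 : (Finset.univ.filter (fun i : Fin N' => i.val < n - 1)).card ≤ n - 1 := by
      have := Finset.card_le_card_of_injOn (fun i : Fin N' => i.val)
        (s := Finset.univ.filter (fun i : Fin N' => i.val < n - 1)) (t := Finset.range (n-1))
        (by intro a ha; exact Finset.mem_range.2 (Finset.mem_filter.1 ha).2)
        (by intro a _ b _ h; exact Fin.ext h)
      simpa using this
    omega
  · -- blue copy of tK2 : impossible
    have hblue : ∀ i : Fin t, n - 1 ≤ (f (i, 0)).val ∨ n - 1 ≤ (f (i, 1)).val := by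
      intro i
      have hadj : (tCopies t (⊤ : SimpleGraph (Fin 2))).Adj (i, 0) (i, 1) :=
        show (i, (0 : Fin 2)).1 = (i, (1 : Fin 2)).1 ∧ (⊤ : SimpleGraph (Fin 2)).Adj 0 1 from
        ⟨rfl, (by simp : (⊤ : SimpleGraph (Fin 2)).Adj 0 1)⟩
      have := hf _ _ hadj
      rw [SimpleGraph.compl_adj, hC] at this
      obtain ⟨hne, hnot⟩ := this
      simp only [not_and] at hnot
      by_contra hcon
      push_neg at hcon
      exact hnot hne hcon.1 hcon.2
    set g : Fin t → Fin N' := fun i => if n - 1 ≤ (f (i, 0)).val then f (i, 0) else f (i, 1) with hg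
    have hgval : ∀ i, n - 1 ≤ (g i).val := by
      intro i
      show n - 1 ≤ ((if n - 1 ≤ (f (i, 0)).val then f (i, 0) else f (i, 1)) : Fin N').val
      by_cases h : n - 1 ≤ (f (i, 0)).val
      · rw [if_pos h]; exact h
      · rw [if_neg h]
        rcases hblue i with h1 | h1
        · omega
        · exact h1
    have hginj : Function.Injective g := by
      intro i j hij
      have hij' : (if n - 1 ≤ (f (i, 0)).val then f (i, 0) else f (i, 1))
          = (if n - 1 ≤ (f (j, 0)).val then f (j, 0) else f (j, 1)) := hij
      clear hij
      rename' hij' => hij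
      split at hij <;> split at hij <;>
        · have := f.injective hij
          exact (Prod.ext_iff.1 this).1
    have h1 : t ≤ (Finset.univ.filter (fun z : Fin N' => n - 1 ≤ z.val)).card := by
      calc t = (Finset.univ : Finset (Fin t)).card := by simp
      _ ≤ _ := Finset.card_le_card_of_injOn g
          (fun i _ => Finset.mem_filter.2 ⟨Finset.mem_univ _, hgval i⟩) hginj.injOn
    have h2 : (Finset.univ.filter (fun z : Fin N' => n - 1 ≤ z.val)).card ≤ N' - (n - 1) := by
      have := Finset.card_le_card_of_injOn (fun z : Fin N' => z.val - (n - 1))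
        (s := Finset.univ.filter (fun z : Fin N' => n - 1 ≤ z.val)) (t := Finset.range (N' - (n - 1)))
        (by intro a ha
            have h3 := (Finset.mem_filter.1 ha).2
            have h4 := a.isLt
            refine Finset.mem_range.2 ?_
            show a.val - (n - 1) < N' - (n - 1)
            omega)
        (by intro a ha b hb h
            have h3 := (Finset.mem_filter.1 ha).2
            have h4 := (Finset.mem_filter.1 hb).2
            have h5 : a.val - (n - 1) = b.val - (n - 1) := h
            exact Fin.ext (by omega))
      simpa using this
    omega

set_option maxHeartbeats 1000000 in
lemma upper_ramsey {V : Type*} [Fintype V] [DecidableEq V] (G : SimpleGraph V) [DecidableRel G.Adj]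
    (n k t : ℕ) (ht : 1 ≤ t) (hn : Fintype.card V = n)
    (hedge : G.edgeFinset.card = n + k - 2)
    (c : ℚ) (hc : c = if t ≤ 2 then 1 / ((t : ℚ) + 2) else 1 / (4 * (t : ℚ) - 5))
    (hk2 : (k : ℚ) ≤ c * (n : ℚ) ^ 2)
    (hn2 : 3 * (c⁻¹ * (c⁻¹ - 1) / 2) ≤ (n : ℚ)) (hn9 : 9 ≤ n) (h2tn : 2 * t ≤ n) :
    IsRamsey G (tCopies t (⊤ : SimpleGraph (Fin 2))) (n + t - 1) := by
  classical
  obtain ⟨N, hNdef⟩ : ∃ N, n + t - 1 = N := ⟨_, rfl⟩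
  rw [hNdef]
  intro C
  by_cases hblue : ContainsCopy Cᶜ (tCopies t (⊤ : SimpleGraph (Fin 2)))
  · exact Or.inr hblue
  left
  -- a maximum blue matching
  obtain ⟨M, hM, hMmax⟩ : ∃ M : Finset (Fin N × Fin N), BM Cᶜ M ∧
      ∀ M' : Finset (Fin N × Fin N), BM Cᶜ M' → M'.card ≤ M.card := by
    obtain ⟨M, hM1, hM2⟩ := Finset.exists_max_image
      ((Finset.univ : Finset (Finset (Fin N × Fin N))).filter (fun M => BM Cᶜ M))
      Finset.card ⟨∅, Finset.mem_filter.2 ⟨Finset.mem_univ _, by constructor <;> simp⟩⟩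
    exact ⟨M, (Finset.mem_filter.1 hM1).2,
      fun M' hM' => hM2 M' (Finset.mem_filter.2 ⟨Finset.mem_univ _, hM'⟩)⟩
  set m := M.card with hm
  have hmt : m ≤ t - 1 := by
    by_contra hcon
    have htm : t ≤ m := by omega
    obtain ⟨T, hTM, hTcard⟩ := Finset.exists_subset_card_eq htm
    exact hblue (bm_to_copy Cᶜ T (bm_subset hTM hM) hTcard)
  -- unmatched vertices
  set U := (Finset.univ : Finset (Fin N)) \ M.biUnion (fun p => {p.1, p.2}) with hU
  have hUnm : ∀ z ∈ U, ∀ p ∈ M, z ≠ p.1 ∧ z ≠ p.2 := by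
    intro z hz p hp
    rw [hU, Finset.mem_sdiff] at hz
    have := hz.2
    rw [Finset.mem_biUnion] at this
    push_neg at this
    have h2 := this p hp
    simp only [Finset.mem_insert, Finset.mem_singleton] at h2
    push_neg at h2
    exact h2
  have hmatched_not_U : ∀ p ∈ M, p.1 ∉ U ∧ p.2 ∉ U := by
    intro p hp
    constructor <;> intro hmem
    · exact (hUnm _ hmem p hp).1 rfl
    · exact (hUnm _ hmem p hp).2 rfl
  have hbi_card : (M.biUnion (fun p => {p.1, p.2})).card = 2 * m := by
    rw [Finset.card_biUnion]
    · have : ∀ p ∈ M, ({p.1, p.2} : Finset (Fin N)).card = 2 := by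
        intro p hp
        rw [Finset.card_insert_of_notMem (by simp [(hM.1 p hp).ne]), Finset.card_singleton]
      rw [Finset.sum_congr rfl this]
      simp [hm, mul_comm]
    · intro p hp q hq hpq
      have h4 := hM.2 p hp q hq hpq
      simp only [Finset.disjoint_left, Finset.mem_insert, Finset.mem_singleton]
      rintro a (rfl | rfl) <;> push_neg <;> constructor
      · exact h4.1
      · exact h4.2.1
      · exact h4.2.2.1
      · exact h4.2.2.2
  have h2mN : 2 * m ≤ N := by
    rw [← hbi_card]
    exact (Finset.card_le_card (Finset.subset_univ _)).trans (by simp)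
  have hUcard : U.card = N - 2 * m := by
    rw [hU, Finset.card_sdiff_of_subset (Finset.subset_univ _), hbi_card, Finset.card_univ, Fintype.card_fin]
  -- U is a red clique
  have hUred : ∀ x ∈ U, ∀ y ∈ U, x ≠ y → C.Adj x y := by
    intro x hx y hy hxy
    by_contra hnadj
    have hbadj : Cᶜ.Adj x y := (SimpleGraph.compl_adj C x y).2 ⟨hxy, hnadj⟩
    have hBM' : BM Cᶜ (insert (x, y) M) :=
      bm_insert hM hbadj (hUnm x hx) (hUnm y hy)
    have hcard' := hMmax _ hBM'
    rw [Finset.card_insert_of_notMem (fun hmem => (hmatched_not_U (x,y) hmem).1 hx)] at hcard'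
    omega
  -- good endpoints
  have hch : ∀ p : Fin N × Fin N, ∃ wx : Fin N × Fin N, p ∈ M →
      ((wx.1 = p.1 ∨ wx.1 = p.2) ∧ ∀ u ∈ U, Cᶜ.Adj wx.1 u → u = wx.2) := by
    intro p
    by_cases hp : p ∈ M
    · by_cases hex : ∃ u ∈ U, Cᶜ.Adj p.1 u
      · obtain ⟨x₀, hx₀U, hx₀blue⟩ := hex
        refine ⟨(p.2, x₀), fun _ => ⟨Or.inr rfl, ?_⟩⟩
        intro u huU hublue
        by_contra hne
        -- augment the matching
        have hne' : (u : Fin N) ≠ x₀ := hne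
        have hp12 : p.1 ≠ p.2 := (hM.1 p hp).ne
        have herase : BM Cᶜ (M.erase p) := bm_subset (Finset.erase_subset _ _) hM
        have hins1 : BM Cᶜ (insert (p.2, u) (M.erase p)) := by
          apply bm_insert herase
          · exact hublue
          · intro r hr
            have hrM := Finset.mem_of_mem_erase hr
            have hrp := Finset.ne_of_mem_erase hr
            have h4 := hM.2 p hp r hrM (fun hh => hrp hh.symm)
            exact ⟨h4.2.2.1, h4.2.2.2⟩
          · intro r hr
            exact hUnm u huU r (Finset.mem_of_mem_erase hr)
        have hins2 : BM Cᶜ (insert (p.1, x₀) (insert (p.2, u) (M.erase p))) := by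
          apply bm_insert hins1
          · exact hx₀blue
          · intro r hr
            rcases Finset.mem_insert.1 hr with rfl | hr
            · exact ⟨hp12, (hUnm u huU p hp).1.symm⟩
            · have hrM := Finset.mem_of_mem_erase hr
              have hrp := Finset.ne_of_mem_erase hr
              have h4 := hM.2 p hp r hrM (fun hh => hrp hh.symm)
              exact ⟨h4.1, h4.2.1⟩
          · intro r hr
            rcases Finset.mem_insert.1 hr with rfl | hr
            · exact ⟨(hUnm x₀ hx₀U p hp).2, hne'.symm⟩
            · exact hUnm x₀ hx₀U r (Finset.mem_of_mem_erase hr)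
        have hnm1 : (p.2, u) ∉ M.erase p := by
          intro hmem
          have hrM := Finset.mem_of_mem_erase hmem
          have hrp := Finset.ne_of_mem_erase hmem
          exact (hM.2 p hp _ hrM (fun hh => hrp hh.symm)).2.2.1 rfl
        have hnm2 : (p.1, x₀) ∉ insert (p.2, u) (M.erase p) := by
          intro hmem
          rcases Finset.mem_insert.1 hmem with heq | hmem
          · exact hp12 (congrArg Prod.fst heq)
          · have hrM := Finset.mem_of_mem_erase hmem
            have hrp := Finset.ne_of_mem_erase hmem
            exact (hM.2 p hp _ hrM (fun hh => hrp hh.symm)).1 rfl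
        have hm1 : 1 ≤ m := by
          rw [hm]
          exact Finset.card_pos.2 ⟨p, hp⟩
        have hcard2 := hMmax _ hins2
        rw [Finset.card_insert_of_notMem hnm2, Finset.card_insert_of_notMem hnm1,
          Finset.card_erase_of_mem hp] at hcard2
        omega
      · push_neg at hex
        refine ⟨(p.1, p.1), fun _ => ⟨Or.inl rfl, ?_⟩⟩
        intro u huU hublue
        exact absurd hublue (hex u huU)
    · exact ⟨(p.1, p.1), fun h => absurd h hp⟩
  choose wx hwx using hch
  -- case split on q
  by_cases hq0 : 2 * m + 1 ≤ t
  · -- |U| ≥ n : embed G into the red clique U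
    have hUn : n ≤ U.card := by rw [hUcard]; omega
    obtain ⟨U', hU'U, hU'card⟩ := Finset.exists_subset_card_eq hUn
    have hcardeq : Fintype.card V = Fintype.card ↥U' := by
      rw [Fintype.card_coe, hU'card, hn]
    let e : V ≃ ↥U' := Fintype.equivOfCardEq hcardeq
    refine ⟨⟨fun v => (e v).val, fun a b hab => ?_⟩, ?_⟩
    · exact e.injective (Subtype.ext hab)
    · intro a b hab
      show C.Adj (e a).val (e b).val
      exact hUred _ (hU'U (e a).2) _ (hU'U (e b).2)
        (fun hh => hab.ne (e.injective (Subtype.ext hh)))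
  · -- main case : q ≥ 1
    push_neg at hq0
    have hq0' : t ≤ 2 * m := by omega
    have ht2 : 2 ≤ t := by omega
    set q := 2 * m + 1 - t with hqdef
    have hq1 : 1 ≤ q := by omega
    have hqm : q ≤ m := by omega
    have hqt : q ≤ t - 1 := by omega
    have hUcard2 : U.card = n - q := by omega
    -- independent set of size 2t-2
    have hindep : ∃ I : Finset V, (∀ a ∈ I, ∀ b ∈ I, ¬G.Adj a b) ∧ I.card = 2 * t - 2 := by
      by_contra hcon
      push_neg at hcon
      have hbound : ∀ I : Finset V, I ⊆ Finset.univ →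
          (∀ a ∈ I, ∀ b ∈ I, ¬G.Adj a b) → I.card ≤ 2 * t - 3 := by
        intro I _ hI
        by_contra hcard
        push_neg at hcard
        obtain ⟨J, hJI, hJcard⟩ := Finset.exists_subset_card_eq
          (show 2 * t - 2 ≤ I.card by omega)
        exact hcon J (fun a ha b hb => hI a (hJI ha) b (hJI hb)) hJcard
      have htb := turan_bound G (2 * t - 3) (by omega) Finset.univ hbound
      rw [Finset.card_univ, hn] at htb
      have hsum : ∑ v ∈ Finset.univ, ((G.neighborFinset v ∩ Finset.univ).card : ℚ)
          = 2 * (G.edgeFinset.card : ℚ) := by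
        rw [Finset.sum_congr rfl (fun v _ => by rw [Finset.inter_univ])]
        have h1 : ∑ v : V, G.degree v = 2 * G.edgeFinset.card :=
          G.sum_degrees_eq_twice_card_edges
        have h2 : ∑ v ∈ Finset.univ, ((G.neighborFinset v).card : ℚ)
            = ((∑ v : V, G.degree v : ℕ) : ℚ) := by
          push_cast
          rfl
        rw [h2, h1]
        push_cast
        ring
      rw [hsum] at htb
      have hecast : (G.edgeFinset.card : ℚ) = (n : ℚ) + (k : ℚ) - 2 := by
        rw [hedge, Nat.cast_sub (show 2 ≤ n + k by omega)]
        push_cast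
        ring
      have htcast : ((2 * t - 3 : ℕ) : ℚ) = 2 * (t : ℚ) - 3 := by
        rw [Nat.cast_sub (show 3 ≤ 2 * t by omega)]
        push_cast
        ring
      rw [hecast, htcast] at htb
      by_cases htle : t ≤ 2
      · have ht2' : t = 2 := by omega
        subst ht2'
        rw [if_pos (le_refl 2)] at hc
        norm_num at hc
        rw [hc] at hk2 hn2
        norm_num at hk2 hn2 htb
        have hn18 : (18:ℚ) ≤ (n:ℚ) := by exact_mod_cast hn2
        nlinarith [htb, hk2, hn18, sq_nonneg ((n:ℚ) - 18)]
      · have ht3 : 3 ≤ t := by omega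
        have ht3' : (3 : ℚ) ≤ (t : ℚ) := by exact_mod_cast ht3
        rw [if_neg htle] at hc
        have hpos : (0 : ℚ) < 4 * (t : ℚ) - 5 := by linarith
        have hcinv : c⁻¹ = 4 * (t : ℚ) - 5 := by
          rw [hc]
          field_simp
        rw [hcinv] at hn2
        have hk2' : (k : ℚ) * (4 * (t : ℚ) - 5) ≤ (n : ℚ) ^ 2 := by
          rw [hc] at hk2
          have := mul_le_mul_of_nonneg_right hk2 (le_of_lt hpos)
          calc (k : ℚ) * (4 * (t : ℚ) - 5) ≤ 1 / (4 * (t : ℚ) - 5) * (n:ℚ)^2 * (4 * (t : ℚ) - 5) := this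
          _ = (n : ℚ) ^ 2 := by field_simp
        have hn0 : (0 : ℚ) ≤ (n : ℚ) := Nat.cast_nonneg n
        nlinarith [htb, hk2', hn2, hpos, hn0, mul_le_mul_of_nonneg_right hn2 hn0]
    obtain ⟨I, hIind, hIcard⟩ := hindep
    -- select q edges
    have hqm' : q ≤ M.card := by omega
    obtain ⟨Q, hQM, hQcard⟩ := Finset.exists_subset_card_eq hqm'
    have hwx1 : ∀ p ∈ M, ((wx p).1 = p.1 ∨ (wx p).1 = p.2) := fun p hp => (hwx p hp).1
    set W := Q.image (fun p => (wx p).1) with hWdef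
    have hWinjOn : Set.InjOn (fun p => (wx p).1) ↑Q := by
      intro p hp p' hp' heq
      by_contra hne
      have h4 := hM.2 p (hQM hp) p' (hQM hp') hne
      simp only at heq
      rcases hwx1 p (hQM hp) with h5 | h5 <;> rcases hwx1 p' (hQM hp') with h6 | h6 <;>
        rw [h5, h6] at heq
      exacts [h4.1 heq, h4.2.1 heq, h4.2.2.1 heq, h4.2.2.2 heq]
    have hWcard : W.card = q := by
      rw [hWdef, Finset.card_image_of_injOn hWinjOn, hQcard]
    have hWnotU : ∀ x ∈ W, x ∉ U := by
      intro x hx hxU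
      obtain ⟨p, hp, rfl⟩ := Finset.mem_image.1 hx
      rcases hwx1 p (hQM hp) with h5 | h5 <;> rw [h5] at hxU
      · exact (hmatched_not_U p (hQM hp)).1 hxU
      · exact (hmatched_not_U p (hQM hp)).2 hxU
    set X := (Q.image (fun p => (wx p).2)) ∩ U with hXdef
    have hXU : X ⊆ U := Finset.inter_subset_right
    have hXcard : X.card ≤ q := by
      calc X.card ≤ (Q.image (fun p => (wx p).2)).card :=
            Finset.card_le_card Finset.inter_subset_left
      _ ≤ Q.card := Finset.card_image_le
      _ = q := hQcard
    -- select S and T inside I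
    have hqI : q ≤ I.card := by omega
    obtain ⟨S, hSI, hScard⟩ := Finset.exists_subset_card_eq hqI
    have hXIS : X.card ≤ (I \ S).card := by
      rw [Finset.card_sdiff_of_subset hSI, hIcard, hScard]
      omega
    obtain ⟨T, hTIS, hTcard⟩ := Finset.exists_subset_card_eq hXIS
    set R := (Finset.univ \ S) \ T with hRdef
    have hTuS : T ⊆ Finset.univ \ S := fun x hx =>
      Finset.mem_sdiff.2 ⟨Finset.mem_univ _, (Finset.mem_sdiff.1 (hTIS hx)).2⟩
    have hRcard : R.card = n - q - X.card := by
      rw [hRdef, Finset.card_sdiff_of_subset hTuS, Finset.card_sdiff_of_subset (Finset.subset_univ S),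
        Finset.card_univ, hn, hScard, hTcard]
    have hUXcard : (U \ X).card = n - q - X.card := by
      rw [Finset.card_sdiff_of_subset hXU, hUcard2]
    -- equivalences
    have hce1 : Fintype.card ↥S = Fintype.card ↥W := by
      rw [Fintype.card_coe, Fintype.card_coe, hScard, hWcard]
    have hce2 : Fintype.card ↥T = Fintype.card ↥X := by
      rw [Fintype.card_coe, Fintype.card_coe, hTcard]
    have hce3 : Fintype.card ↥R = Fintype.card ↥(U \ X) := by
      rw [Fintype.card_coe, Fintype.card_coe, hRcard, hUXcard]
    let eS : ↥S ≃ ↥W := Fintype.equivOfCardEq hce1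
    let eT : ↥T ≃ ↥X := Fintype.equivOfCardEq hce2
    let eR : ↥R ≃ ↥(U \ X) := Fintype.equivOfCardEq hce3
    have hRmem : ∀ v : V, v ∉ S → v ∉ T → v ∈ R := fun v h1 h2 =>
      Finset.mem_sdiff.2 ⟨Finset.mem_sdiff.2 ⟨Finset.mem_univ _, h1⟩, h2⟩
    set f : V → Fin N := fun v =>
      if h1 : v ∈ S then (eS ⟨v, h1⟩ : ↥W).val
      else if h2 : v ∈ T then (eT ⟨v, h2⟩ : ↥X).val
      else (eR ⟨v, hRmem v h1 h2⟩ : ↥(U \ X)).val with hfdef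
    have hfS : ∀ v (h1 : v ∈ S), f v = (eS ⟨v, h1⟩ : ↥W).val := by
      intro v h1
      simp only [hfdef, dif_pos h1]
    have hfT : ∀ v (h1 : v ∉ S) (h2 : v ∈ T), f v = (eT ⟨v, h2⟩ : ↥X).val := by
      intro v h1 h2
      simp only [hfdef, dif_neg h1, dif_pos h2]
    have hfR : ∀ v (h1 : v ∉ S) (h2 : v ∉ T), f v = (eR ⟨v, hRmem v h1 h2⟩ : ↥(U \ X)).val := by
      intro v h1 h2
      simp only [hfdef, dif_neg h1, dif_neg h2]
    have hmemf : ∀ v : V, (v ∈ S ∧ f v ∈ W) ∨ (v ∉ S ∧ v ∈ T ∧ f v ∈ X) ∨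
        (v ∉ S ∧ v ∉ T ∧ f v ∈ U \ X) := by
      intro v
      by_cases h1 : v ∈ S
      · exact Or.inl ⟨h1, by rw [hfS v h1]; exact (eS ⟨v, h1⟩).2⟩
      by_cases h2 : v ∈ T
      · exact Or.inr (Or.inl ⟨h1, h2, by rw [hfT v h1 h2]; exact (eT ⟨v, h2⟩).2⟩)
      · exact Or.inr (Or.inr ⟨h1, h2, by rw [hfR v h1 h2]; exact (eR ⟨v, hRmem v h1 h2⟩).2⟩)
    -- injectivity
    have hinj : Function.Injective f := by
      intro a b hab
      by_cases haS : a ∈ S <;> by_cases hbS : b ∈ S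
      · rw [hfS a haS, hfS b hbS] at hab
        have := eS.injective (Subtype.ext hab)
        exact congrArg Subtype.val this
      · exfalso
        rcases hmemf b with ⟨h1, _⟩ | ⟨_, _, h3⟩ | ⟨_, _, h3⟩
        · exact hbS h1
        · have : f a ∈ W := ((hmemf a).resolve_right (by rintro (⟨h,_⟩|⟨h,_⟩) <;> exact h haS)).2
          exact hWnotU (f a) this (hab ▸ hXU h3)
        · have : f a ∈ W := ((hmemf a).resolve_right (by rintro (⟨h,_⟩|⟨h,_⟩) <;> exact h haS)).2
          exact hWnotU (f a) this (hab ▸ (Finset.mem_sdiff.1 h3).1)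
      · exfalso
        rcases hmemf a with ⟨h1, _⟩ | ⟨_, _, h3⟩ | ⟨_, _, h3⟩
        · exact haS h1
        · have : f b ∈ W := ((hmemf b).resolve_right (by rintro (⟨h,_⟩|⟨h,_⟩) <;> exact h hbS)).2
          exact hWnotU (f b) this (hab ▸ hXU h3)
        · have : f b ∈ W := ((hmemf b).resolve_right (by rintro (⟨h,_⟩|⟨h,_⟩) <;> exact h hbS)).2
          exact hWnotU (f b) this (hab ▸ (Finset.mem_sdiff.1 h3).1)
      · by_cases haT : a ∈ T <;> by_cases hbT : b ∈ T
        · rw [hfT a haS haT, hfT b hbS hbT] at hab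
          exact congrArg Subtype.val (eT.injective (Subtype.ext hab))
        · exfalso
          rw [hfT a haS haT, hfR b hbS hbT] at hab
          have h3 : (eT ⟨a, haT⟩ : ↥X).val ∈ X := (eT ⟨a, haT⟩).2
          have h4 : (eR ⟨b, hRmem b hbS hbT⟩ : ↥(U \ X)).val ∈ U \ X :=
            (eR ⟨b, hRmem b hbS hbT⟩).2
          rw [hab] at h3
          exact (Finset.mem_sdiff.1 h4).2 h3
        · exfalso
          rw [hfR a haS haT, hfT b hbS hbT] at hab
          have h3 : (eT ⟨b, hbT⟩ : ↥X).val ∈ X := (eT ⟨b, hbT⟩).2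
          have h4 : (eR ⟨a, hRmem a haS haT⟩ : ↥(U \ X)).val ∈ U \ X :=
            (eR ⟨a, hRmem a haS haT⟩).2
          rw [← hab] at h3
          exact (Finset.mem_sdiff.1 h4).2 h3
        · rw [hfR a haS haT, hfR b hbS hbT] at hab
          exact congrArg Subtype.val (eR.injective (Subtype.ext hab))
    -- red goodness of chosen endpoints
    have hWgood : ∀ p ∈ Q, ∀ u' ∈ U, u' ∉ X → C.Adj ((wx p).1) u' := by
      intro p hp u' hu'U hu'X
      have hfwW : (wx p).1 ∈ W := Finset.mem_image_of_mem _ hp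
      have hne : (wx p).1 ≠ u' := fun heq => hWnotU _ hfwW (heq ▸ hu'U)
      by_contra hnadj
      have hbadj : Cᶜ.Adj ((wx p).1) u' := (SimpleGraph.compl_adj C _ _).2 ⟨hne, hnadj⟩
      have heq := (hwx p (hQM hp)).2 u' hu'U hbadj
      apply hu'X
      rw [hXdef, Finset.mem_inter]
      exact ⟨heq ▸ Finset.mem_image_of_mem _ hp, hu'U⟩
    have hIindS : ∀ a ∈ I, ∀ b ∈ I, ¬G.Adj a b := hIind
    have hTI : T ⊆ I := fun x hx => (Finset.mem_sdiff.1 (hTIS hx)).1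
    -- adjacency
    have hadjf : ∀ u v : V, G.Adj u v → C.Adj (f u) (f v) := by
      intro u v huv
      rcases hmemf u with ⟨hu1, hu2⟩ | ⟨hu1, hu1', hu2⟩ | ⟨hu1, hu1', hu2⟩ <;>
        rcases hmemf v with ⟨hv1, hv2⟩ | ⟨hv1, hv1', hv2⟩ | ⟨hv1, hv1', hv2⟩
      · exact absurd huv (hIindS u (hSI hu1) v (hSI hv1))
      · exact absurd huv (hIindS u (hSI hu1) v (hTI hv1'))
      · -- u ∈ S, v ∈ R
        obtain ⟨p, hp, hpeq⟩ := Finset.mem_image.1 hu2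
        rw [← hpeq]
        exact hWgood p hp (f v) (Finset.mem_sdiff.1 hv2).1 (Finset.mem_sdiff.1 hv2).2
      · exact absurd huv (hIindS u (hTI hu1') v (hSI hv1))
      · exact absurd huv (hIindS u (hTI hu1') v (hTI hv1'))
      · -- u ∈ T, v ∈ R
        exact hUred (f u) (hXU hu2) (f v) (Finset.mem_sdiff.1 hv2).1
          (fun heq => (Finset.mem_sdiff.1 hv2).2 (heq ▸ hu2))
      · -- u ∈ R, v ∈ S
        obtain ⟨p, hp, hpeq⟩ := Finset.mem_image.1 hv2
        rw [← hpeq]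
        exact (hWgood p hp (f u) (Finset.mem_sdiff.1 hu2).1 (Finset.mem_sdiff.1 hu2).2).symm
      · -- u ∈ R, v ∈ T
        exact hUred (f u) (Finset.mem_sdiff.1 hu2).1 (f v) (hXU hv2)
          (fun heq => (Finset.mem_sdiff.1 hu2).2 (heq ▸ hv2))
      · -- u, v ∈ R
        exact hUred (f u) (Finset.mem_sdiff.1 hu2).1 (f v) (Finset.mem_sdiff.1 hv2).1
          (fun heq => huv.ne (hinj heq))
    exact ⟨⟨f, hinj⟩, hadjf⟩

theorem stmt9 {V : Type*} [Fintype V] [DecidableEq V] (G : SimpleGraph V) [DecidableRel G.Adj]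
    (n k t : ℕ) (ht : 1 ≤ t) (hn : Fintype.card V = n) (hconn : G.Connected)
    (hedge : G.edgeFinset.card = n + k - 2)
    (c : ℚ) (hc : c = if t ≤ 2 then 1 / ((t : ℚ) + 2) else 1 / (4 * (t : ℚ) - 5))
    (hk1 : 1 ≤ k) (hk2 : (k : ℚ) ≤ c * (n : ℚ) ^ 2)
    (hn2 : 3 * (c⁻¹ * (c⁻¹ - 1) / 2) ≤ (n : ℚ)) :
    ramsey G (tCopies t (⊤ : SimpleGraph (Fin 2))) = n + t - 1 := by
  have ht1 : (1 : ℚ) ≤ (t : ℚ) := by exact_mod_cast ht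
  have hbase : (9 : ℚ) ≤ (n : ℚ) ∧ 2 * (t : ℚ) ≤ (n : ℚ) := by
    by_cases htle : t ≤ 2
    · have ht2 : (t : ℚ) ≤ 2 := by exact_mod_cast htle
      rw [if_pos htle] at hc
      have hpos : (0 : ℚ) < (t : ℚ) + 2 := by linarith
      have hcinv : c⁻¹ = (t : ℚ) + 2 := by rw [hc]; field_simp
      rw [hcinv] at hn2
      constructor <;> nlinarith [hn2, ht1, ht2]
    · have ht3 : (3 : ℚ) ≤ (t : ℚ) := by exact_mod_cast (by omega : 3 ≤ t)
      rw [if_neg htle] at hc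
      have hpos : (0 : ℚ) < 4 * (t : ℚ) - 5 := by linarith
      have hcinv : c⁻¹ = 4 * (t : ℚ) - 5 := by rw [hc]; field_simp
      rw [hcinv] at hn2
      constructor <;> nlinarith [hn2, ht3]
  have hn9 : 9 ≤ n := by exact_mod_cast hbase.1
  have h2tn : 2 * t ≤ n := by
    have : ((2 * t : ℕ) : ℚ) ≤ (n : ℚ) := by push_cast; exact hbase.2
    exact_mod_cast this
  have hup : IsRamsey G (tCopies t (⊤ : SimpleGraph (Fin 2))) (n + t - 1) :=
    upper_ramsey G n k t ht hn hedge c hc hk2 hn2 hn9 h2tn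
  have hne : {N | IsRamsey G (tCopies t (⊤ : SimpleGraph (Fin 2))) N}.Nonempty :=
    ⟨n + t - 1, hup⟩
  apply le_antisymm
  · exact Nat.sInf_le hup
  · by_contra hcon
    push_neg at hcon
    have hmem := Nat.sInf_mem hne
    have hle : sInf {N | IsRamsey G (tCopies t (⊤ : SimpleGraph (Fin 2))) N} ≤ n + t - 2 := by
      unfold ramsey at hcon
      omega
    exact lower_no_ramsey G n t _ ht hn (by omega) hconn hle hmem
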